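/- Let $L(x_1,\dots,x_n)$ be a Laurent polynomial independent of $a$ and $x_0$, and let $t\leq nb$ be an integer, with $b$ a nonnegative integer. Then $\mathrm{CT}_x\, x_0^{t}\,L(x_1,\dots,x_n)\prod_{i=1}^n(x_0/x_i;q)_a\,(qx_i/x_0;q)_b$ is a polynomial in $q^a$ of degree at most $nb-t$. Moreover, if $t>nb$ then this constant term vanishes. -/

import Mathlib

/-!
Lemma `lem1` of the paper (polynomiality in `q^a`): for a Laurent polynomial
`L(x_1,…,x_n)` independent of `a` and `x_0`, and an integer `t`,
`CT_x x_0^t L(x_1,…,x_n) ∏_{i=1}^n (x_0/x_i)_a (q x_i/x_0)_b`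
is, for `t ≤ nb`, a polynomial in `q^a` of degree at most `nb - t`; and it
vanishes identically if `t > nb`.
Laurent polynomials in `x_0,…,x_n` are modelled in
`AddMonoidAlgebra K (Fin (n+1) → ℤ)` over `K = ℚ(q)`, with `x_0` the variable
of index `0` and `x_i = x_{i.succ}`; "independent of `x_0`" means every
exponent vector in the support of `L` has `0` in position `0`.
-/

open Finset

noncomputable section

abbrev K : Type := RatFunc ℚ
noncomputable def q : K := RatFunc.X
abbrev L (m : ℕ) : Type := AddMonoidAlgebra K (Fin m → ℤ)
noncomputable def mon {m : ℕ} (v : Fin m → ℤ) (a : K) : L m := AddMonoidAlgebra.single v a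
noncomputable def poch {m : ℕ} (v : Fin m → ℤ) (a : K) (k : ℕ) : L m :=
  ∏ j ∈ Finset.range k, (1 - mon v (a * q ^ j))
noncomputable def CT {m : ℕ} (f : L m) : K := f.coeff 0
noncomputable def e {m : ℕ} (i : Fin m) : Fin m → ℤ := Pi.single i 1

section Aux
open Polynomial

lemma q_ne_zero : q ≠ 0 := by
  simpa [q] using RatFunc.X_ne_zero (K := ℚ)

lemma q_pow_ne_one (k : ℕ) : q ^ (k + 1) ≠ 1 := by
  intro h
  have : (Polynomial.X : Polynomial ℚ) ^ (k+1) = 1 := by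
    apply RatFunc.algebraMap_injective (K := ℚ) ?_
    · simpa [q, RatFunc.algebraMap_X, map_pow, map_one] using h
  have := congrArg Polynomial.natDegree this
  simp [Polynomial.natDegree_X_pow] at this

noncomputable def alp (k : ℕ) : K := (-1)^k / ∏ i ∈ range k, (q^(i+1) - 1)

lemma alp_denom_ne (k : ℕ) : (∏ i ∈ range k, (q^(i+1) - 1)) ≠ 0 := by
  apply Finset.prod_ne_zero_iff.2
  intro i _
  exact sub_ne_zero.2 (q_pow_ne_one i)

lemma alp_rec (k : ℕ) : alp (k+1) * (1 - q^(k+1)) = alp k := by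
  have h1 := alp_denom_ne k
  have h2 : (q^(k+1) - 1) ≠ 0 := sub_ne_zero.2 (q_pow_ne_one k)
  rw [alp, alp, prod_range_succ, div_mul_eq_mul_div]
  rw [show ((-1:K))^(k+1) * (1 - q^(k+1)) = (-1)^k * (q^(k+1) - 1) by ring]
  exact mul_div_mul_right _ _ h2

noncomputable def B (k : ℕ) : Polynomial K := C (alp k) * ∏ j ∈ range k, (X - C (q^j))

lemma B_zero : B 0 = 1 := by simp [B, alp]

lemma natDegree_B_le (k : ℕ) : (B k).natDegree ≤ k := by
  rw [B]
  refine le_trans natDegree_mul_le ?_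
  rw [natDegree_C, zero_add]
  refine le_trans (natDegree_prod_le _ _) ?_
  refine le_trans (Finset.sum_le_sum fun j _ => (natDegree_X_sub_C (q^j)).le) ?_
  simp

lemma B_eval (k : ℕ) (x : K) : (B k).eval x = alp k * ∏ j ∈ range k, (x - q^j) := by
  simp [B, eval_prod]

lemma B_eval_one (k : ℕ) : (B (k+1)).eval 1 = 0 := by
  rw [B_eval]
  have : (∏ j ∈ range (k+1), ((1:K) - q^j)) = 0 :=
    Finset.prod_eq_zero (Finset.mem_range.2 (Nat.succ_pos k)) (by simp)
  rw [this, mul_zero]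

lemma B_funEq (k : ℕ) (x : K) :
    (B (k+1)).eval (q * x) = (B (k+1)).eval x - x * (B k).eval x := by
  rw [B_eval, B_eval, B_eval]
  have h1 : (∏ j ∈ range (k+1), (q * x - q^j)) =
      q^k * (q*x - 1) * ∏ j ∈ range k, (x - q^j) := by
    rw [Finset.prod_range_succ' (fun j => q * x - q^j)]
    rw [show (∏ j ∈ range k, (q * x - q^(j+1))) = ∏ j ∈ range k, q * (x - q^j) by
      apply Finset.prod_congr rfl; intro j _; rw [pow_succ']; ring]
    rw [Finset.prod_mul_distrib]
    simp [mul_comm, mul_assoc, mul_left_comm]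
  have h2 : (∏ j ∈ range (k+1), (x - q^j)) = (x - q^k) * ∏ j ∈ range k, (x - q^j) := by
    rw [Finset.prod_range_succ]; ring
  rw [h1, h2]
  have hrec : alp k = alp (k+1) * (1 - q^(k+1)) := (alp_rec k).symm
  rw [hrec]
  rw [pow_succ]
  ring

variable {m : ℕ}

lemma poch_succ (v : Fin m → ℤ) (α : K) (k : ℕ) :
    poch v α (k+1) = poch v α k * (1 - mon v (α * q ^ k)) := Finset.prod_range_succ _ _

lemma poch_zero (v : Fin m → ℤ) (α : K) : poch v α 0 = 1 := Finset.prod_range_zero _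

lemma poch_support (v : Fin m → ℤ) (α : K) (k : ℕ) :
    ∀ w ∈ (poch v α k).coeff.support, ∃ j ≤ k, w = j • v := by
  induction k with
  | zero =>
    intro w hw
    rw [poch_zero, AddMonoidAlgebra.one_def, AddMonoidAlgebra.coeff_single] at hw
    have : w = 0 := by
      have := Finsupp.support_single_subset hw
      simpa using this
    exact ⟨0, le_rfl, by simp [this]⟩
  | succ k ih =>
    intro w hw
    rw [poch_succ] at hw
    obtain ⟨u, hu, z, hz, rfl⟩ := Finset.mem_add.1 (AddMonoidAlgebra.support_coeff_mul_subset _ _ hw)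
    obtain ⟨j, hj, rfl⟩ := ih u hu
    have hz' : z = 0 ∨ z = v := by
      have h1 : (1 - mon v (α * q ^ k)).coeff.support ⊆ {0, v} := by
        rw [AddMonoidAlgebra.coeff_sub, AddMonoidAlgebra.one_def, mon,
          AddMonoidAlgebra.coeff_single, AddMonoidAlgebra.coeff_single]
        refine (Finsupp.support_sub).trans ?_
        apply Finset.union_subset
        · exact (Finsupp.support_single_subset).trans (by simp)
        · exact (Finsupp.support_single_subset).trans (by simp)
      simpa using h1 hz
    rcases hz' with rfl | rfl
    · exact ⟨j, le_trans hj (Nat.le_succ k), by simp⟩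
    · exact ⟨j + 1, Nat.succ_le_succ hj, by rw [succ_nsmul]⟩

lemma mul_one_sub_mon_apply (F : L m) (v : Fin m → ℤ) (c : K) (w : Fin m → ℤ) :
    (F * (1 - mon v c)).coeff w = F.coeff w - F.coeff (w - v) * c := by
  rw [mul_sub, mul_one, AddMonoidAlgebra.coeff_sub, Finsupp.sub_apply, mon,
    AddMonoidAlgebra.coeff_mul_single_apply, sub_eq_add_neg w v]

lemma nsmul_cancel {v : Fin (m+1) → ℤ} (hv0 : v 0 = 1) {j k : ℕ} (h : j • v = k • v) :
    j = k := by
  have : (j:ℤ) = k := by simpa [hv0, nsmul_eq_mul] using congrFun h 0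
  exact_mod_cast this

lemma poch_off_lattice {v : Fin (m+1) → ℤ} (α : K) (a : ℕ) (w : Fin (m+1) → ℤ)
    (hw : ∀ j : ℕ, w ≠ j • v) : (poch v α a).coeff w = 0 := by
  by_contra h
  obtain ⟨j, _, hj⟩ := poch_support v α a w (Finsupp.mem_support_iff.2 h)
  exact hw j hj

lemma neg_not_lattice {v : Fin (m+1) → ℤ} (hv0 : v 0 = 1) (w : Fin (m+1) → ℤ)
    (hw : w = -v) : ∀ j : ℕ, w ≠ j • v := by
  intro j hj
  rw [hw] at hj
  have : (-1 : ℤ) = j := by simpa [hv0, nsmul_eq_mul] using congrFun hj 0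
  omega

lemma poch_coeff {v : Fin (m+1) → ℤ} (hv0 : v 0 = 1) (a k : ℕ) :
    (poch v 1 a).coeff ((k • v : Fin (m+1) → ℤ)) = (B k).eval (q ^ a) := by
  induction a generalizing k with
  | zero =>
    rw [poch_zero]
    cases k with
    | zero =>
      simp only [zero_smul, pow_zero]
      rw [B_zero]
      simp [AddMonoidAlgebra.one_def]
    | succ k =>
      rw [pow_zero, B_eval_one]
      have hne : ((k+1) • v : Fin (m+1) → ℤ) ≠ 0 := by
        intro h
        have : ((k:ℤ)+1) = 0 := by simpa [hv0, nsmul_eq_mul] using congrFun h 0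
        omega
      rw [AddMonoidAlgebra.one_def, AddMonoidAlgebra.coeff_single]
      exact Finsupp.single_eq_of_ne' (fun h => hne h.symm)
  | succ a ih =>
    rw [poch_succ, mul_one_sub_mon_apply]
    cases k with
    | zero =>
      rw [show ((0:ℕ) • v - v : Fin (m+1) → ℤ) = -v by simp]
      rw [poch_off_lattice 1 a _ (neg_not_lattice hv0 _ rfl)]
      rw [ih 0, B_zero]
      simp
    | succ k =>
      rw [show ((k+1) • v - v : Fin (m+1) → ℤ) = k • v by rw [succ_nsmul]; abel]
      rw [ih (k+1), ih k, one_mul]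
      rw [pow_succ q a, ← mul_comm q (q^a), B_funEq k (q^a)]
      ring


section GoodPart

variable {m : ℕ}

def Bdd (N : ℕ) (f : L (m+1)) : Prop :=
  ∀ w ∈ f.coeff.support, (∀ i : Fin (m+1), i ≠ 0 → w i ≤ (N:ℤ)) ∧ |∑ i, w i| ≤ (N:ℤ)

def Good (c : ℤ) (f : ℕ → L (m+1)) : Prop :=
  (∃ N : ℕ, ∀ a, Bdd N (f a)) ∧
  ∀ w : Fin (m+1) → ℤ, ∃ p : Polynomial K,
    (∀ a, (f a).coeff w = p.eval (q ^ a)) ∧ (p ≠ 0 → (p.natDegree : ℤ) ≤ w 0 + c)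

noncomputable def box (N N' : ℕ) (w : Fin (m+1) → ℤ) : Finset (Fin (m+1) → ℤ) :=
  Fintype.piFinset fun i =>
    Finset.Icc (if i = 0 then -((N:ℤ) + (m+1)*N) else w i - N')
               (if i = 0 then w 0 + ((N':ℤ) + (m+1)*N') else (N:ℤ))

lemma u0_lower {N : ℕ} {u : Fin (m+1) → ℤ} (h1 : ∀ i, i ≠ 0 → u i ≤ (N:ℤ))
    (h2 : |∑ i, u i| ≤ (N:ℤ)) : -((N:ℤ) + (m+1)*N) ≤ u 0 := by
  have e1 : u 0 + ∑ i ∈ Finset.univ.erase 0, u i = ∑ i, u i :=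
    Finset.add_sum_erase Finset.univ u (Finset.mem_univ 0)
  have e2 : ∑ i ∈ Finset.univ.erase 0, u i ≤ ((m+1):ℤ)*N := by
    calc ∑ i ∈ Finset.univ.erase 0, u i ≤ ∑ _i ∈ Finset.univ.erase 0, (N:ℤ) :=
          Finset.sum_le_sum (fun i hi => h1 i (Finset.mem_erase.1 hi).1)
      _ = ((Finset.univ.erase (0 : Fin (m+1))).card : ℤ) * N := by
          rw [Finset.sum_const, nsmul_eq_mul]
      _ ≤ ((m+1):ℤ)*N := by
          have hc : (Finset.univ.erase (0 : Fin (m+1))).card ≤ m+1 := by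
            refine le_trans (Finset.card_le_card (Finset.erase_subset _ _)) ?_
            simp
          have : ((Finset.univ.erase (0 : Fin (m+1))).card : ℤ) ≤ ((m+1):ℤ) := by
            exact_mod_cast hc
          exact mul_le_mul_of_nonneg_right this (by positivity)
  have h3 := abs_le.1 h2
  linarith

lemma mem_box {N N' : ℕ} {w u : Fin (m+1) → ℤ}
    (hu1 : ∀ i, i ≠ 0 → u i ≤ (N:ℤ)) (hu2 : |∑ i, u i| ≤ (N:ℤ))
    (hv1 : ∀ i, i ≠ 0 → (w - u) i ≤ (N':ℤ)) (hv2 : |∑ i, (w - u) i| ≤ (N':ℤ)) :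
    u ∈ box N N' w := by
  unfold _root_.box
  rw [Fintype.mem_piFinset]
  intro i
  rw [Finset.mem_Icc]
  by_cases hi : i = 0
  · subst hi
    simp only [eq_self_iff_true, if_true]
    constructor
    · exact u0_lower hu1 hu2
    · have := u0_lower hv1 hv2
      have hsub : (w - u) 0 = w 0 - u 0 := rfl
      linarith
  · simp only [if_neg hi]
    constructor
    · have := hv1 i hi
      have hsub : (w - u) i = w i - u i := rfl
      linarith
    · exact hu1 i hi

lemma mul_apply_sum (f g : L (m+1)) (S : Finset (Fin (m+1) → ℤ)) (hS : f.coeff.support ⊆ S)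
    (w : Fin (m+1) → ℤ) : (f * g).coeff w = ∑ u ∈ S, f.coeff u * g.coeff (w - u) := by
  conv_lhs => rw [← AddMonoidAlgebra.sum_coeff_single f]
  rw [Finsupp.sum]
  rw [Finset.sum_subset hS (fun u _ hu => by
    rw [Finsupp.notMem_support_iff.1 hu, AddMonoidAlgebra.single_zero])]
  rw [Finset.sum_mul, AddMonoidAlgebra.coeff_sum, Finset.sum_apply']
  refine Finset.sum_congr rfl (fun u _ => ?_)
  rw [AddMonoidAlgebra.coeff_single_mul_apply, neg_add_eq_sub]

lemma Good.mul {c d : ℤ} {f g : ℕ → L (m+1)} (hf : Good c f) (hg : Good d g) :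
    Good (c + d) (fun a => f a * g a) := by
  obtain ⟨⟨N, hN⟩, hPex⟩ := hf
  obtain ⟨⟨N', hN'⟩, hQex⟩ := hg
  choose P hPe hPd using hPex
  choose Q hQe hQd using hQex
  constructor
  · refine ⟨N + N', fun a w hw => ?_⟩
    obtain ⟨u, hu, z, hz, rfl⟩ := Finset.mem_add.1 (AddMonoidAlgebra.support_coeff_mul_subset _ _ hw)
    obtain ⟨hu1, hu2⟩ := hN a u hu
    obtain ⟨hz1, hz2⟩ := hN' a z hz
    constructor
    · intro i hi
      have := hu1 i hi; have := hz1 i hi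
      have : (u + z) i = u i + z i := rfl
      push_cast
      simp only [Pi.add_apply]
      linarith [hu1 i hi, hz1 i hi]
    · have : ∑ i, (u + z) i = (∑ i, u i) + ∑ i, z i := by
        simp [Finset.sum_add_distrib]
      rw [this]
      push_cast
      calc |(∑ i, u i) + ∑ i, z i| ≤ |∑ i, u i| + |∑ i, z i| := abs_add_le _ _
        _ ≤ (N:ℤ) + N' := add_le_add hu2 hz2
  · intro w
    refine ⟨∑ u ∈ box N N' w, P u * Q (w - u), fun a => ?_, ?_⟩
    · rw [mul_apply_sum (f a) (g a) ((f a).coeff.support ∪ box N N' w)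
        Finset.subset_union_left w]
      rw [Polynomial.eval_finset_sum]
      rw [← Finset.sum_subset (Finset.subset_union_right) ?van]
      · refine Finset.sum_congr rfl (fun u _ => ?_)
        rw [Polynomial.eval_mul, hPe, hQe]
      case van =>
        intro u hu hub
        by_cases hsf : (f a).coeff u = 0
        · rw [hsf, zero_mul]
        · by_cases hsg : (g a).coeff (w - u) = 0
          · rw [hsg, mul_zero]
          · exfalso
            apply hub
            obtain ⟨hu1, hu2⟩ := hN a u (Finsupp.mem_support_iff.2 hsf)
            obtain ⟨hv1, hv2⟩ := hN' a (w - u) (Finsupp.mem_support_iff.2 hsg)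
            exact mem_box hu1 hu2 hv1 hv2
    · intro hp
      have hterm : ∀ u ∈ box N N' w, P u * Q (w - u) ≠ 0 →
          (((P u * Q (w - u)).natDegree : ℤ)) ≤ w 0 + (c + d) := by
        intro u _ h
        have h1 : P u ≠ 0 := left_ne_zero_of_mul h
        have h2 : Q (w - u) ≠ 0 := right_ne_zero_of_mul h
        rw [Polynomial.natDegree_mul h1 h2]
        have d1 := hPd u h1
        have d2 := hQd (w - u) h2
        have hsub : (w - u) 0 = w 0 - u 0 := rfl
        rw [hsub] at d2
        push_cast
        linarith
      rcases le_or_gt 0 (w 0 + (c + d)) with hpos | hneg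
      · have hd : (∑ u ∈ box N N' w, P u * Q (w - u)).natDegree ≤ (w 0 + (c + d)).toNat := by
          apply Polynomial.natDegree_sum_le_of_forall_le
          intro u hu
          by_cases h : P u * Q (w - u) = 0
          · simp [h]
          · have := hterm u hu h
            omega
        calc ((∑ u ∈ box N N' w, P u * Q (w - u)).natDegree : ℤ)
            ≤ ((w 0 + (c + d)).toNat : ℤ) := by exact_mod_cast hd
          _ = w 0 + (c + d) := Int.toNat_of_nonneg hpos
      · exfalso
        apply hp
        apply Finset.sum_eq_zero
        intro u hu
        by_contra h
        have := hterm u hu h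
        omega

end GoodPart
section Atoms

variable {m : ℕ}

lemma Good.const (F : L (m+1)) (c : ℤ) (h : ∀ w ∈ F.coeff.support, -c ≤ w 0) :
    Good c (fun _ => F) := by
  classical
  constructor
  · set g : (Fin (m+1) → ℤ) → ℕ :=
      fun w => (∑ i, w i).natAbs ⊔ Finset.univ.sup (fun i => (w i).toNat) with hg
    refine ⟨F.coeff.support.sup g, fun a w hw' => ?_⟩
    have hw : w ∈ F.coeff.support := hw'
    have hle : g w ≤ F.coeff.support.sup g := Finset.le_sup hw
    have hsub1 : (∑ i, w i).natAbs ≤ g w := le_sup_left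
    have hsub2 : ∀ i, (w i).toNat ≤ g w := fun i =>
      le_trans (Finset.le_sup (f := fun j => (w j).toNat) (Finset.mem_univ i)) le_sup_right
    constructor
    · intro i _
      calc w i ≤ ((w i).toNat : ℤ) := Int.self_le_toNat _
        _ ≤ ((F.coeff.support.sup g : ℕ) : ℤ) := by exact_mod_cast le_trans (hsub2 i) hle
    · rw [Int.abs_eq_natAbs]
      exact_mod_cast le_trans hsub1 hle
  · intro w
    refine ⟨Polynomial.C (F.coeff w), fun a => (Polynomial.eval_C).symm, fun hp => ?_⟩
    have hw : w ∈ F.coeff.support := Finsupp.mem_support_iff.2 (fun h0 => hp (by rw [h0, map_zero]))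
    have := h w hw
    rw [Polynomial.natDegree_C]
    push_cast
    linarith

lemma Good.one : Good 0 (fun _ => (1 : L (m+1))) := by
  apply Good.const
  intro w hw
  have : w = 0 := by
    rw [AddMonoidAlgebra.one_def, AddMonoidAlgebra.coeff_single] at hw
    simpa using Finsupp.support_single_subset hw
  simp [this]

lemma Good.pochA {v : Fin (m+1) → ℤ} (hv0 : v 0 = 1) (hvi : ∀ i, i ≠ 0 → v i ≤ 0)
    (hvs : ∑ i, v i = 0) : Good 0 (fun a => poch v 1 a) := by
  constructor
  · refine ⟨0, fun a w hw => ?_⟩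
    obtain ⟨j, _, rfl⟩ := poch_support v 1 a w hw
    constructor
    · intro i hi
      have := hvi i hi
      have h1 : (j • v) i = j • v i := rfl
      rw [h1, nsmul_eq_mul]
      push_cast
      nlinarith [Int.ofNat_nonneg j]
    · have : ∑ i, (j • v) i = (j : ℤ) * ∑ i, v i := by
        rw [Finset.mul_sum]
        exact Finset.sum_congr rfl (fun i _ => by rw [nsmul_eq_mul]; rfl)
      rw [this, hvs, mul_zero]
      simp
  · intro w
    by_cases hw : ∃ j : ℕ, w = j • v
    · obtain ⟨j, rfl⟩ := hw
      refine ⟨B j, fun a => poch_coeff hv0 a j, fun _ => ?_⟩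
      have hd := natDegree_B_le j
      have hw0 : (j • v) 0 = (j : ℤ) := by
        have : (j • v) 0 = j • v 0 := rfl
        rw [this, hv0, nsmul_eq_mul, mul_one]
      rw [hw0, add_zero]
      exact_mod_cast hd
    · push_neg at hw
      exact ⟨0, fun a => by rw [poch_off_lattice 1 a w hw, Polynomial.eval_zero],
        fun hp => absurd rfl hp⟩

lemma Good.prod {ι : Type*} (s : Finset ι) (c : ι → ℤ) (f : ι → ℕ → L (m+1))
    (h : ∀ i ∈ s, Good (c i) (f i)) :
    Good (∑ i ∈ s, c i) (fun a => ∏ i ∈ s, f i a) := by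
  classical
  induction s using Finset.cons_induction with
  | empty => simpa using (Good.one (m := m))
  | cons i s hi ih =>
    have hmul := Good.mul (h i (Finset.mem_cons_self i s))
      (ih (fun j hj => h j (Finset.mem_cons.2 (Or.inr hj))))
    simpa [Finset.prod_cons, Finset.sum_cons, Finset.prod_insert hi, Finset.sum_insert hi] using hmul

end Atoms

lemma e_sub_apply_zero {n : ℕ} (i : Fin n) : (e 0 - e i.succ : Fin (n+1) → ℤ) 0 = 1 := by
  simp [e, Pi.single_apply, (Fin.succ_ne_zero i).symm]


end Aux

theorem polynomiality_lemma (n b : ℕ) (t : ℤ) (Lf : L (n + 1))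
    (hLf : ∀ v ∈ Lf.coeff.support, v 0 = 0) :
    (t ≤ (n : ℤ) * b →
      ∃ p : Polynomial K, (p.natDegree : ℤ) ≤ (n : ℤ) * b - t ∧
        ∀ a : ℕ, CT (mon (Pi.single 0 t) 1 * Lf *
            ∏ i : Fin n, poch (e 0 - e i.succ) 1 a * poch (e i.succ - e 0) q b)
          = p.eval (q ^ a)) ∧
    ((n : ℤ) * b < t →
      ∀ a : ℕ, CT (mon (Pi.single 0 t) 1 * Lf *
          ∏ i : Fin n, poch (e 0 - e i.succ) 1 a * poch (e i.succ - e 0) q b) = 0) := by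
  classical
  have G1 : Good (m := n) (-t) (fun _ : ℕ => mon (Pi.single 0 t) 1) := by
    apply Good.const
    intro w hw
    rw [mon, AddMonoidAlgebra.coeff_single] at hw
    have hws : w = Pi.single 0 t := by
      simpa using Finsupp.support_single_subset hw
    simp [hws]
  have G2 : Good (m := n) 0 (fun _ : ℕ => Lf) := by
    apply Good.const
    intro w hw
    simp [hLf w hw]
  have G3 : ∀ i : Fin n, Good 0 (fun a => poch (e 0 - e i.succ) 1 a) := by
    intro i
    apply Good.pochA (e_sub_apply_zero i)
    · intro j hj
      simp only [Pi.sub_apply, e, Pi.single_apply]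
      rw [if_neg (fun h => hj h)]
      split_ifs <;> omega
    · simp only [Pi.sub_apply, Finset.sum_sub_distrib]
      simp [e, Finset.sum_pi_single']
  have G4 : ∀ i : Fin n, Good (b : ℤ) (fun _ : ℕ => poch (e i.succ - e 0) q b) := by
    intro i
    apply Good.const
    intro w hw
    obtain ⟨j, hj, rfl⟩ := poch_support _ _ _ w hw
    have hv0 : (e i.succ - e 0 : Fin (n+1) → ℤ) 0 = -1 := by
      simp [e, Pi.single_apply, (Fin.succ_ne_zero i).symm]
    have : (j • (e i.succ - e 0 : Fin (n+1) → ℤ)) 0 = (j:ℤ) * (-1) := by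
      have h1 : (j • (e i.succ - e 0 : Fin (n+1) → ℤ)) 0
          = j • ((e i.succ - e 0 : Fin (n+1) → ℤ) 0) := rfl
      rw [h1, hv0, nsmul_eq_mul]
    rw [this]
    omega
  have Gprod : Good (∑ _i : Fin n, ((0:ℤ) + b))
      (fun a => ∏ i : Fin n, poch (e 0 - e i.succ) 1 a * poch (e i.succ - e 0) q b) :=
    Good.prod Finset.univ _ _ (fun i _ => Good.mul (G3 i) (G4 i))
  have Gfull := Good.mul (Good.mul G1 G2) Gprod
  have hc : ((-t + 0) + ∑ _i : Fin n, ((0:ℤ) + b)) = (n : ℤ) * b - t := by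
    simp [Finset.sum_const, Finset.card_univ]
    ring
  rw [hc] at Gfull
  obtain ⟨-, hP⟩ := Gfull
  obtain ⟨p, hpe, hpd⟩ := hP 0
  have hpe' : ∀ a : ℕ, CT (mon (Pi.single 0 t) 1 * Lf *
      ∏ i : Fin n, poch (e 0 - e i.succ) 1 a * poch (e i.succ - e 0) q b) = p.eval (q ^ a) :=
    fun a => hpe a
  have hz : ((0 : Fin (n+1) → ℤ)) 0 = 0 := rfl
  rw [hz, zero_add] at hpd
  constructor
  · intro ht
    refine ⟨p, ?_, hpe'⟩
    by_cases hp0 : p = 0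
    · rw [hp0, Polynomial.natDegree_zero]
      push_cast
      linarith
    · exact hpd hp0
  · intro ht a
    have hp0 : p = 0 := by
      by_contra h
      have := hpd h
      have : (0:ℤ) ≤ (p.natDegree : ℤ) := Int.ofNat_nonneg _
      linarith [hpd h]
    rw [hpe' a, hp0, Polynomial.eval_zero]


end
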